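/- arXiv:1908.03207 — 6 statements merged into one kernel-verified Lean document; each statement's English description precedes it below -/
import Mathlib

section
/- For complex numbers x, y, t with |xt| < 1 and |yt| ≤ 1 (or as formal power series in t), the generating function ∑_{n=0}^∞ p_n(x,y) t^n / (q;q)_n = (yt;q)_∞ / (xt;q)_∞ holds, where p_n(x,y) = ∏_{j=0}^{n-1}(x - q^j y). -/
open Finset

noncomputable def qPoch (q a : ℂ) (n : ℕ) : ℂ := ∏ j ∈ Finset.range n, (1 - a * q ^ j)

noncomputable def qPochInf (q a : ℂ) : ℂ := ∏' j : ℕ, (1 - a * q ^ j)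

noncomputable def cauchyP (q x y : ℂ) (n : ℕ) : ℂ := ∏ j ∈ Finset.range n, (x - q ^ j * y)

noncomputable def qBinom (q : ℂ) (n k : ℕ) : ℂ := qPoch q q n / (qPoch q q k * qPoch q q (n - k))

noncomputable def qDeriv (q : ℂ) (f : ℂ → ℂ) : ℂ → ℂ := fun x => (f x - f (q * x)) / x

noncomputable def qTheta (q : ℂ) (f : ℂ → ℂ → ℂ) : ℂ → ℂ → ℂ :=
  fun x y => (f (q⁻¹ * x) y - f x (q * y)) / (q⁻¹ * x - y)

/-- `₁Φ₁(a; 0; q, z)` -/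
noncomputable def phi11 (q a z : ℂ) : ℂ :=
  ∑' m : ℕ, (-1) ^ m * q ^ m.choose 2 * qPoch q a m * z ^ m / qPoch q q m

/-- generalized Cauchy polynomials `p_n(x,y,a)` -/
noncomputable def genCauchy (q a x y : ℂ) (n : ℕ) : ℂ :=
  ∑ k ∈ Finset.range (n + 1),
    qBinom q n k * (-1) ^ k * q ^ k.choose 2 * qPoch q a k * x ^ (n - k) * y ^ k

/-- generalized Hahn polynomials `h_n(x,y,a,b|q)` -/
noncomputable def hahn (q x y a b : ℂ) (n : ℕ) : ℂ :=
  ∑ k ∈ Finset.range (n + 1),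
    qBinom q n k * (-1) ^ k * q ^ k.choose 2 * b ^ k * qPoch q a k * cauchyP q y x (n - k)

open Filter Topology

section Aux
variable {q : ℝ}

lemma normQ (hq0 : 0 < q) : ‖(q : ℂ)‖ = q := by
  rw [Complex.norm_real, Real.norm_of_nonneg hq0.le]

lemma normQpow (hq0 : 0 < q) (j : ℕ) : ‖((q : ℂ)) ^ j‖ = q ^ j := by
  rw [norm_pow, normQ hq0]

lemma one_sub_ne_zero {z : ℂ} (hz : ‖z‖ < 1) : 1 - z ≠ 0 := by
  intro h
  rw [sub_eq_zero] at h
  rw [← h] at hz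
  simp at hz

lemma one_sub_qq_ne (hq0 : 0 < q) (hq1 : q < 1) (j : ℕ) :
    (1 : ℂ) - (q : ℂ) * (q : ℂ) ^ j ≠ 0 := by
  apply one_sub_ne_zero
  rw [norm_mul, normQ hq0, normQpow hq0]
  have h1 : q ^ j ≤ 1 := pow_le_one₀ hq0.le hq1.le
  nlinarith

lemma qPoch_ne_zero (hq0 : 0 < q) (hq1 : q < 1) (n : ℕ) : qPoch (q : ℂ) (q : ℂ) n ≠ 0 := by
  rw [qPoch, Finset.prod_ne_zero_iff]
  exact fun j _ => one_sub_qq_ne hq0 hq1 j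

lemma qPoch_succ (a : ℂ) (n : ℕ) :
    qPoch (q : ℂ) a (n + 1) = qPoch (q : ℂ) a n * (1 - a * (q : ℂ) ^ n) :=
  Finset.prod_range_succ _ _

lemma cauchyP_succ (x y : ℂ) (n : ℕ) :
    cauchyP (q : ℂ) x y (n + 1) = cauchyP (q : ℂ) x y n * (x - (q : ℂ) ^ n * y) :=
  Finset.prod_range_succ _ _

lemma norm_one_sub_qq (hq0 : 0 < q) (hq1 : q < 1) (n : ℕ) :
    ‖(1 : ℂ) - (q : ℂ) * (q : ℂ) ^ n‖ = 1 - q * q ^ n := by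
  have h1 : q * q ^ n ≤ 1 := by
    have := pow_le_one₀ hq0.le hq1.le (n := n); nlinarith
  have : (1 : ℂ) - (q : ℂ) * (q : ℂ) ^ n = ((1 - q * q ^ n : ℝ) : ℂ) := by push_cast; ring
  rw [this, Complex.norm_real, Real.norm_of_nonneg (by linarith)]

/-- Summability of the generating series. -/
lemma summable_F (hq0 : 0 < q) (hq1 : q < 1) (x y s : ℂ)
    (hxs : ‖x * s‖ < 1) (hys : ‖y * s‖ ≤ 1) :
    Summable (fun n : ℕ => cauchyP (q : ℂ) x y n * s ^ n / qPoch (q : ℂ) (q : ℂ) n) := by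
  set f : ℕ → ℂ := fun n => cauchyP (q : ℂ) x y n * s ^ n / qPoch (q : ℂ) (q : ℂ) n with hf
  set a := ‖x * s‖ with ha
  have ha0 : 0 ≤ a := norm_nonneg _
  set r : ℝ := (1 + a) / 2 with hr
  have hr1 : r < 1 := by rw [hr]; linarith
  have har : a < r := by rw [hr]; linarith
  apply summable_of_ratio_norm_eventually_le hr1
  set ε : ℝ := (r - a) / 2 with hε
  have hε0 : 0 < ε := by rw [hε]; linarith
  have hev : ∀ᶠ n : ℕ in atTop, q ^ n ≤ ε := by
    have := tendsto_pow_atTop_nhds_zero_of_lt_one hq0.le hq1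
    exact this.eventually (ge_mem_nhds hε0)
  filter_upwards [hev] with n hn
  have key : f (n + 1) = f n * ((x - (q : ℂ) ^ n * y) * s / (1 - (q : ℂ) * (q : ℂ) ^ n)) := by
    rw [hf]
    simp only
    rw [cauchyP_succ, qPoch_succ]
    have h1 := qPoch_ne_zero hq0 hq1 n
    have h2 := one_sub_qq_ne hq0 hq1 n
    field_simp
    ring
  rw [key, norm_mul, mul_comm (‖f n‖)]
  gcongr ?_ * ‖f n‖
  rw [norm_div, norm_one_sub_qq hq0 hq1]
  have hq1n : q * q ^ n ≤ q ^ n := by nlinarith [pow_pos hq0 n, pow_le_one₀ hq0.le hq1.le (n := n)]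
  have hpos : 0 < 1 - q * q ^ n := by nlinarith
  rw [div_le_iff₀ hpos]
  have hb : ‖(x - (q : ℂ) ^ n * y) * s‖ ≤ a + q ^ n := by
    have : (x - (q : ℂ) ^ n * y) * s = x * s - (q : ℂ) ^ n * (y * s) := by ring
    rw [this]
    have h2 : ‖(q : ℂ) ^ n * (y * s)‖ ≤ q ^ n := by
      rw [norm_mul, normQpow hq0]
      have : q ^ n * ‖y * s‖ ≤ q ^ n * 1 :=
        mul_le_mul_of_nonneg_left hys (pow_nonneg hq0.le n)
      linarith
    calc ‖x * s - (q : ℂ) ^ n * (y * s)‖ ≤ ‖x * s‖ + ‖(q : ℂ) ^ n * (y * s)‖ := norm_sub_le _ _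
      _ ≤ a + q ^ n := by rw [ha]; linarith
  calc ‖(x - (q : ℂ) ^ n * y) * s‖ ≤ a + q ^ n := hb
    _ ≤ r * (1 - q * q ^ n) := by nlinarith [pow_pos hq0 n, pow_pos hq0 (n+1)]

end Aux
section Fun
variable {q : ℝ}

noncomputable def Fgen (q x y s : ℂ) : ℂ :=
  ∑' n : ℕ, cauchyP q x y n * s ^ n / qPoch q q n

/-- The functional equation `(1 - xs) F(s) = (1 - ys) F(qs)`. -/
lemma funeq (hq0 : 0 < q) (hq1 : q < 1) (x y s : ℂ)
    (hxs : ‖x * s‖ < 1) (hys : ‖y * s‖ ≤ 1) :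
    (1 - x * s) * Fgen (q : ℂ) x y s = (1 - y * s) * Fgen (q : ℂ) x y ((q : ℂ) * s) := by
  set f : ℕ → ℂ := fun n => cauchyP (q : ℂ) x y n * s ^ n / qPoch (q : ℂ) (q : ℂ) n with hfd
  set g : ℕ → ℂ := fun n => cauchyP (q : ℂ) x y n * ((q : ℂ) * s) ^ n / qPoch (q : ℂ) (q : ℂ) n
    with hgd
  have hq01 : ‖(q : ℂ)‖ ≤ 1 := by rw [normQ hq0]; linarith
  have Sf : Summable f := summable_F hq0 hq1 x y s hxs hys
  have Sg : Summable g := by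
    apply summable_F hq0 hq1 x y ((q : ℂ) * s)
    · calc ‖x * ((q : ℂ) * s)‖ = ‖(q : ℂ)‖ * ‖x * s‖ := by rw [← norm_mul]; ring_nf
        _ ≤ 1 * ‖x * s‖ := by gcongr
        _ < 1 := by rwa [one_mul]
    · calc ‖y * ((q : ℂ) * s)‖ = ‖(q : ℂ)‖ * ‖y * s‖ := by rw [← norm_mul]; ring_nf
        _ ≤ 1 * 1 := by gcongr
        _ = 1 := one_mul 1
  -- key pointwise identity
  have key : ∀ n : ℕ, f (n + 1) - g (n + 1) = x * s * f n - y * s * g n := by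
    intro n
    simp only [hfd, hgd]
    rw [cauchyP_succ, qPoch_succ, mul_pow, mul_pow]
    have h1 := qPoch_ne_zero hq0 hq1 n
    have h2 := one_sub_qq_ne hq0 hq1 n
    field_simp
    linear_combination (cauchyP (q : ℂ) x y n * s * s ^ n * (x - (q : ℂ) ^ n * y)) *
      inv_mul_cancel₀ h2
  have hshift : ∑' n : ℕ, (f n - g n) = ∑' n : ℕ, (f (n + 1) - g (n + 1)) := by
    rw [Summable.tsum_eq_zero_add (Sf.sub Sg)]
    have h0 : f 0 - g 0 = 0 := by
      simp [hfd, hgd, cauchyP, qPoch]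
    rw [h0, zero_add]
  have main : ∑' n, f n - ∑' n, g n = x * s * ∑' n, f n - y * s * ∑' n, g n := by
    rw [← Summable.tsum_sub Sf Sg, hshift]
    have : ∀ n : ℕ, f (n + 1) - g (n + 1) = x * s * f n - y * s * g n := key
    rw [tsum_congr this, Summable.tsum_sub (Sf.mul_left _) (Sg.mul_left _),
      tsum_mul_left, tsum_mul_left]
  show (1 - x * s) * ∑' n, f n = (1 - y * s) * ∑' n, g n
  have := main
  ring_nf
  ring_nf at this
  linear_combination this
end Fun

section Iter
variable {q : ℝ}

lemma iter (hq0 : 0 < q) (hq1 : q < 1) (x y t : ℂ)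
    (hxt : ‖x * t‖ < 1) (hyt : ‖y * t‖ ≤ 1) (N : ℕ) :
    (∏ j ∈ Finset.range N, (1 - (x * t) * (q : ℂ) ^ j)) * Fgen (q : ℂ) x y t =
      (∏ j ∈ Finset.range N, (1 - (y * t) * (q : ℂ) ^ j)) *
        Fgen (q : ℂ) x y ((q : ℂ) ^ N * t) := by
  induction N with
  | zero => simp
  | succ N ih =>
    have hqn1 : (q : ℝ) ^ N ≤ 1 := pow_le_one₀ hq0.le hq1.le
    have hqn0 : (0 : ℝ) ≤ q ^ N := pow_nonneg hq0.le N
    have hnx : ‖x * ((q : ℂ) ^ N * t)‖ < 1 := by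
      have : x * ((q : ℂ) ^ N * t) = (q : ℂ) ^ N * (x * t) := by ring
      rw [this, norm_mul, normQpow hq0]
      calc q ^ N * ‖x * t‖ ≤ 1 * ‖x * t‖ := by gcongr
        _ < 1 := by rwa [one_mul]
    have hny : ‖y * ((q : ℂ) ^ N * t)‖ ≤ 1 := by
      have : y * ((q : ℂ) ^ N * t) = (q : ℂ) ^ N * (y * t) := by ring
      rw [this, norm_mul, normQpow hq0]
      calc q ^ N * ‖y * t‖ ≤ 1 * 1 := by gcongr
        _ = 1 := one_mul 1
    have hstep := funeq hq0 hq1 x y ((q : ℂ) ^ N * t) hnx hny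
    have harg : (q : ℂ) * ((q : ℂ) ^ N * t) = (q : ℂ) ^ (N + 1) * t := by ring
    rw [harg] at hstep
    rw [Finset.prod_range_succ, Finset.prod_range_succ]
    calc (∏ j ∈ Finset.range N, (1 - x * t * (q : ℂ) ^ j)) * (1 - x * t * (q : ℂ) ^ N) *
          Fgen (q : ℂ) x y t
        = (1 - x * t * (q : ℂ) ^ N) *
            ((∏ j ∈ Finset.range N, (1 - x * t * (q : ℂ) ^ j)) * Fgen (q : ℂ) x y t) := by
          ring
      _ = (1 - x * t * (q : ℂ) ^ N) *
            ((∏ j ∈ Finset.range N, (1 - y * t * (q : ℂ) ^ j)) *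
              Fgen (q : ℂ) x y ((q : ℂ) ^ N * t)) := by rw [ih]
      _ = (∏ j ∈ Finset.range N, (1 - y * t * (q : ℂ) ^ j)) *
            ((1 - x * ((q : ℂ) ^ N * t)) * Fgen (q : ℂ) x y ((q : ℂ) ^ N * t)) := by ring
      _ = (∏ j ∈ Finset.range N, (1 - y * t * (q : ℂ) ^ j)) *
            ((1 - y * ((q : ℂ) ^ N * t)) * Fgen (q : ℂ) x y ((q : ℂ) ^ (N + 1) * t)) := by
          rw [hstep]
      _ = (∏ j ∈ Finset.range N, (1 - y * t * (q : ℂ) ^ j)) * (1 - y * t * (q : ℂ) ^ N) *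
            Fgen (q : ℂ) x y ((q : ℂ) ^ (N + 1) * t) := by ring

lemma tendsto_F0 (hq0 : 0 < q) (hq1 : q < 1) (x y t : ℂ)
    (hxt : ‖x * t‖ < 1) (hyt : ‖y * t‖ ≤ 1) :
    Filter.Tendsto (fun N : ℕ => Fgen (q : ℂ) x y ((q : ℂ) ^ N * t)) atTop (𝓝 1) := by
  have hS : Summable (fun n : ℕ => ‖cauchyP (q : ℂ) x y n * t ^ n / qPoch (q : ℂ) (q : ℂ) n‖) :=
    summable_norm_iff.mpr (summable_F hq0 hq1 x y t hxt hyt)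
  have key : ∀ (N n : ℕ),
      cauchyP (q : ℂ) x y n * ((q : ℂ) ^ N * t) ^ n / qPoch (q : ℂ) (q : ℂ) n =
        cauchyP (q : ℂ) x y n * t ^ n / qPoch (q : ℂ) (q : ℂ) n * ((q : ℂ) ^ n) ^ N := by
    intro N n
    rw [mul_pow, ← pow_mul, ← pow_mul, mul_comm N n]
    ring
  have h1 : Filter.Tendsto
      (fun N : ℕ => ∑' n : ℕ, cauchyP (q : ℂ) x y n * ((q : ℂ) ^ N * t) ^ n /
        qPoch (q : ℂ) (q : ℂ) n) atTop
      (𝓝 (∑' n : ℕ, if n = 0 then (1 : ℂ) else 0)) := by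
    apply tendsto_tsum_of_dominated_convergence hS
    · intro n
      match n with
      | 0 =>
        simp only [if_pos rfl, pow_zero, cauchyP, qPoch, Finset.range_zero, Finset.prod_empty]
        exact tendsto_const_nhds.congr (by simp)
      | Nat.succ k =>
        simp only [if_neg (Nat.succ_ne_zero k)]
        have hlt : ‖(q : ℂ) ^ (k + 1)‖ < 1 := by
          rw [normQpow hq0]
          calc q ^ (k + 1) ≤ q ^ 1 := pow_le_pow_of_le_one hq0.le hq1.le (by omega)
            _ < 1 := by simpa using hq1
        have := (tendsto_pow_atTop_nhds_zero_of_norm_lt_one hlt).const_mul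
          (cauchyP (q : ℂ) x y (k + 1) * t ^ (k + 1) / qPoch (q : ℂ) (q : ℂ) (k + 1))
        rw [mul_zero] at this
        apply this.congr
        intro N
        rw [key N (k + 1)]
    · filter_upwards with N n
      rw [key N n, norm_mul]
      have : ‖((q : ℂ) ^ n) ^ N‖ ≤ 1 := by
        rw [norm_pow, normQpow hq0]
        exact pow_le_one₀ (pow_nonneg hq0.le n) (pow_le_one₀ hq0.le hq1.le)
      calc ‖cauchyP (q : ℂ) x y n * t ^ n / qPoch (q : ℂ) (q : ℂ) n‖ * ‖((q : ℂ) ^ n) ^ N‖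
          ≤ ‖cauchyP (q : ℂ) x y n * t ^ n / qPoch (q : ℂ) (q : ℂ) n‖ * 1 := by gcongr
        _ = _ := mul_one _
  rw [show (∑' n : ℕ, if n = 0 then (1 : ℂ) else 0) = 1 from tsum_ite_eq 0 1] at h1
  exact h1

end Iter

section Prod
variable {q : ℝ}
open Complex

lemma log_summable (hq0 : 0 < q) (hq1 : q < 1) (b : ℂ) (hb : ‖b‖ ≤ 1) :
    Summable (fun j : ℕ => Complex.log (1 - b * (q : ℂ) ^ j)) := by
  obtain ⟨N, hN⟩ := exists_pow_lt_of_lt_one (by norm_num : (0 : ℝ) < 1 / 2) hq1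
  rw [← summable_nat_add_iff N]
  apply Summable.of_norm_bounded (g := fun j : ℕ => 3 / 2 * (q ^ N * q ^ j))
  · exact ((summable_geometric_of_lt_one hq0.le hq1).mul_left _).mul_left _
  · intro j
    have hnorm : ‖-(b * (q : ℂ) ^ (j + N))‖ ≤ q ^ N * q ^ j := by
      rw [norm_neg, norm_mul, normQpow hq0]
      calc ‖b‖ * q ^ (j + N) ≤ 1 * q ^ (j + N) := by
            gcongr
        _ = q ^ N * q ^ j := by rw [one_mul, pow_add]; ring
    have hhalf : ‖-(b * (q : ℂ) ^ (j + N))‖ ≤ 1 / 2 := by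
      refine hnorm.trans ?_
      have : q ^ N * q ^ j ≤ q ^ N * 1 := by
        gcongr
        exact pow_le_one₀ hq0.le hq1.le
      nlinarith
    have := Complex.norm_log_one_add_half_le_self hhalf
    have harg : (1 : ℂ) + -(b * (q : ℂ) ^ (j + N)) = 1 - b * (q : ℂ) ^ (j + N) := by ring
    rw [harg] at this
    calc ‖Complex.log (1 - b * (q : ℂ) ^ (j + N))‖ ≤ 3 / 2 * ‖-(b * (q : ℂ) ^ (j + N))‖ := this
      _ ≤ 3 / 2 * (q ^ N * q ^ j) := by gcongr

lemma facts_ne (hq0 : 0 < q) (hq1 : q < 1) (b : ℂ) (hb : ‖b‖ ≤ 1) (hb1 : b ≠ 1) (j : ℕ) :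
    1 - b * (q : ℂ) ^ j ≠ 0 := by
  match j with
  | 0 =>
    intro h
    rw [pow_zero, mul_one, sub_eq_zero] at h
    exact hb1 h.symm
  | k + 1 =>
    apply one_sub_ne_zero
    rw [norm_mul, normQpow hq0]
    have h1 : q ^ (k + 1) ≤ q ^ 1 := pow_le_pow_of_le_one hq0.le hq1.le (by omega)
    have h2 : (0:ℝ) < q ^ (k+1) := pow_pos hq0 _
    nlinarith

lemma hasProd_poch (hq0 : 0 < q) (hq1 : q < 1) (b : ℂ) (hb : ‖b‖ ≤ 1) :
    HasProd (fun j : ℕ => 1 - b * (q : ℂ) ^ j) (qPochInf (q : ℂ) b) := by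
  by_cases hb1 : b = 1
  · subst hb1
    have h0 : HasProd (fun j : ℕ => 1 - (1 : ℂ) * (q : ℂ) ^ j) 0 := by
      rw [HasProd]
      have hev : ∀ᶠ s : Finset ℕ in Filter.atTop,
          (0 : ℂ) = ∏ j ∈ s, (1 - (1 : ℂ) * (q : ℂ) ^ j) := by
        filter_upwards [Filter.eventually_ge_atTop ({0} : Finset ℕ)] with s hs
        symm
        apply Finset.prod_eq_zero (hs (Finset.mem_singleton_self 0))
        simp
      exact Filter.Tendsto.congr' hev tendsto_const_nhds
    rw [qPochInf, h0.tprod_eq]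
    exact h0
  · have hM : Multipliable (fun j : ℕ => 1 - b * (q : ℂ) ^ j) :=
      Complex.multipliable_of_summable_log (log_summable hq0 hq1 b hb)
    rw [qPochInf]
    exact hM.hasProd

lemma poch_ne (hq0 : 0 < q) (hq1 : q < 1) (b : ℂ) (hb : ‖b‖ < 1) :
    qPochInf (q : ℂ) b ≠ 0 := by
  have hb1 : b ≠ 1 := by intro h; rw [h] at hb; simp at hb
  have h2 : Complex.exp (∑' j : ℕ, Complex.log (1 - b * (q : ℂ) ^ j)) =
      ∏' j : ℕ, (1 - b * (q : ℂ) ^ j) :=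
    Complex.cexp_tsum_eq_tprod (fun j => facts_ne hq0 hq1 b hb.le hb1 j)
      (log_summable hq0 hq1 b hb.le)
  rw [qPochInf, ← h2]
  exact Complex.exp_ne_zero _

end Prod


theorem stmt2 (q : ℝ) (hq0 : 0 < q) (hq1 : q < 1) (x y t : ℂ)
    (hxt : ‖x * t‖ < 1) (hyt : ‖y * t‖ ≤ 1) :
    ∑' n : ℕ, cauchyP (q : ℂ) x y n * t ^ n / qPoch (q : ℂ) (q : ℂ) n =
      qPochInf (q : ℂ) (y * t) / qPochInf (q : ℂ) (x * t) := by
  have hxt' : ‖x * t‖ < 1 := hxt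
  have hyt' : ‖y * t‖ ≤ 1 := hyt
  have hFx := (hasProd_poch hq0 hq1 (x * t) hxt'.le).tendsto_prod_nat
  have hFy := (hasProd_poch hq0 hq1 (y * t) hyt').tendsto_prod_nat
  have h1 : Filter.Tendsto
      (fun N : ℕ => (∏ j ∈ Finset.range N, (1 - (x * t) * (q : ℂ) ^ j)) * Fgen (q : ℂ) x y t)
      atTop (𝓝 (qPochInf (q : ℂ) (x * t) * Fgen (q : ℂ) x y t)) := hFx.mul_const _
  have h2 : Filter.Tendsto
      (fun N : ℕ => (∏ j ∈ Finset.range N, (1 - (x * t) * (q : ℂ) ^ j)) * Fgen (q : ℂ) x y t)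
      atTop (𝓝 (qPochInf (q : ℂ) (y * t) * 1)) := by
    apply Filter.Tendsto.congr (fun N => (iter hq0 hq1 x y t hxt' hyt' N).symm)
    exact hFy.mul (tendsto_F0 hq0 hq1 x y t hxt' hyt')
  have heq := tendsto_nhds_unique h1 h2
  show Fgen (q : ℂ) x y t = _
  rw [eq_div_iff (poch_ne hq0 hq1 (x * t) hxt')]
  linear_combination heq
end

section
/- (Euler's identity) For |x| < 1 and 0 < q < 1, ∑_{k=0}^∞ x^k / (q;q)_k = 1 / (x;q)_∞. -/
open Finset

lemma euler_qPoch_cast (q : ℝ) (k : ℕ) :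
    qPoch (q : ℂ) (q : ℂ) k = ((∏ j ∈ Finset.range k, (1 - q ^ (j + 1)) : ℝ) : ℂ) := by
  rw [qPoch]
  push_cast
  refine Finset.prod_congr rfl fun j _ => by ring

lemma euler_R_pos {q : ℝ} (hq0 : 0 < q) (hq1 : q < 1) (k : ℕ) :
    0 < ∏ j ∈ Finset.range k, (1 - q ^ (j + 1)) :=
  Finset.prod_pos fun j _ => by
    have : q ^ (j + 1) < 1 := pow_lt_one₀ hq0.le hq1 (Nat.succ_ne_zero j)
    linarith

lemma euler_qPoch_ne {q : ℝ} (hq0 : 0 < q) (hq1 : q < 1) (k : ℕ) :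
    qPoch (q : ℂ) (q : ℂ) k ≠ 0 := by
  rw [euler_qPoch_cast]
  exact_mod_cast (euler_R_pos hq0 hq1 k).ne'

lemma euler_norm_term {q : ℝ} (hq0 : 0 < q) (hq1 : q < 1) (y : ℂ) (k : ℕ) :
    ‖y ^ k / qPoch (q : ℂ) (q : ℂ) k‖ = ‖y‖ ^ k / ∏ j ∈ Finset.range k, (1 - q ^ (j + 1)) := by
  rw [euler_qPoch_cast, norm_div, norm_pow, Complex.norm_real,
    Real.norm_of_nonneg (euler_R_pos hq0 hq1 k).le]

lemma euler_summable_norm {q : ℝ} (hq0 : 0 < q) (hq1 : q < 1) {c : ℝ} (hc0 : 0 ≤ c) (hc : c < 1) :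
    Summable (fun k : ℕ => c ^ k / ∏ j ∈ Finset.range k, (1 - q ^ (j + 1))) := by
  have hr : (1 + c) / 2 < 1 := by linarith
  apply summable_of_ratio_norm_eventually_le hr
  have hev : ∀ᶠ n : ℕ in Filter.atTop, q ^ (n + 1) ≤ (1 - c) / 2 := by
    have h := (tendsto_pow_atTop_nhds_zero_of_lt_one hq0.le hq1).eventually_le_const
      (by linarith : (0 : ℝ) < (1 - c) / 2)
    filter_upwards [h] with n hn
    exact le_trans (pow_le_pow_of_le_one hq0.le hq1.le (Nat.le_succ n)) hn
  filter_upwards [hev] with n hn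
  have hRn := euler_R_pos hq0 hq1 n
  have hq' : 0 < 1 - q ^ (n + 1) := by
    have : q ^ (n + 1) < 1 := pow_lt_one₀ hq0.le hq1 (Nat.succ_ne_zero n)
    linarith
  rw [Real.norm_of_nonneg (div_nonneg (by positivity) (euler_R_pos hq0 hq1 _).le),
    Real.norm_of_nonneg (div_nonneg (by positivity) (euler_R_pos hq0 hq1 _).le),
    Finset.prod_range_succ]
  have key : c ≤ (1 + c) / 2 * (1 - q ^ (n + 1)) := by
    nlinarith [pow_nonneg hq0.le (n + 1)]
  calc c ^ (n + 1) / ((∏ j ∈ Finset.range n, (1 - q ^ (j + 1))) * (1 - q ^ (n + 1)))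
      = (c / (1 - q ^ (n + 1))) * (c ^ n / ∏ j ∈ Finset.range n, (1 - q ^ (j + 1))) := by
        field_simp
        ring
    _ ≤ (1 + c) / 2 * (c ^ n / ∏ j ∈ Finset.range n, (1 - q ^ (j + 1))) := by
        apply mul_le_mul_of_nonneg_right _ (by positivity)
        rw [div_le_iff₀ hq']
        linarith

set_option maxHeartbeats 1000000 in
theorem stmt4 (q : ℝ) (hq0 : 0 < q) (hq1 : q < 1) (x : ℂ) (hx : ‖x‖ < 1) :
    ∑' k : ℕ, x ^ k / qPoch (q : ℂ) (q : ℂ) k = 1 / qPochInf (q : ℂ) x := by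
  have hnx : ‖x‖ < 1 := by exact hx
  set f : ℂ → ℂ := fun y => ∑' k : ℕ, y ^ k / qPoch (q : ℂ) (q : ℂ) k with hf
  have hsum : ∀ y : ℂ, ‖y‖ < 1 → Summable (fun k : ℕ => y ^ k / qPoch (q : ℂ) (q : ℂ) k) := by
    intro y hy
    apply Summable.of_norm
    simpa only [euler_norm_term hq0 hq1] using euler_summable_norm hq0 hq1 (norm_nonneg y) hy
  -- functional equation
  have hfun : ∀ y : ℂ, ‖y‖ < 1 → f ((q : ℂ) * y) = (1 - y) * f y := by
    intro y hy
    have hqy : ‖(q : ℂ) * y‖ < 1 := by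
      rw [norm_mul, Complex.norm_real, Real.norm_of_nonneg hq0.le]
      nlinarith [norm_nonneg y]
    have hy1 : HasSum (fun k : ℕ => y ^ k / qPoch (q : ℂ) (q : ℂ) k) (f y) := (hsum y hy).hasSum
    have hy2 : HasSum (fun k : ℕ => ((q : ℂ) * y) ^ k / qPoch (q : ℂ) (q : ℂ) k) (f ((q : ℂ) * y)) :=
      (hsum _ hqy).hasSum
    have hd := hy1.sub hy2
    have hshift : HasSum (fun k : ℕ => y ^ (k + 1) / qPoch (q : ℂ) (q : ℂ) (k + 1)
        - ((q : ℂ) * y) ^ (k + 1) / qPoch (q : ℂ) (q : ℂ) (k + 1)) (f y - f ((q : ℂ) * y)) := by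
      refine (hasSum_nat_add_iff (f := fun k : ℕ => y ^ k / qPoch (q : ℂ) (q : ℂ) k
        - ((q : ℂ) * y) ^ k / qPoch (q : ℂ) (q : ℂ) k) 1).mpr ?_
      simpa [qPoch] using hd
    have hterm : ∀ k : ℕ, y ^ (k + 1) / qPoch (q : ℂ) (q : ℂ) (k + 1)
        - ((q : ℂ) * y) ^ (k + 1) / qPoch (q : ℂ) (q : ℂ) (k + 1)
        = y * (y ^ k / qPoch (q : ℂ) (q : ℂ) k) := by
      intro k
      have h1 : qPoch (q : ℂ) (q : ℂ) (k + 1) = qPoch (q : ℂ) (q : ℂ) k * (1 - (q : ℂ) ^ (k + 1)) := by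
        rw [qPoch, qPoch, Finset.prod_range_succ]
        ring
      have hne := euler_qPoch_ne hq0 hq1 k
      have hne1 : (1 : ℂ) - (q : ℂ) ^ (k + 1) ≠ 0 := by
        have hlt : q ^ (k + 1) < 1 := pow_lt_one₀ hq0.le hq1 (Nat.succ_ne_zero k)
        have : (1 - q ^ (k + 1) : ℝ) ≠ 0 := by linarith
        exact_mod_cast this
      rw [h1]
      field_simp
      ring
    have hs2 : HasSum (fun k : ℕ => y * (y ^ k / qPoch (q : ℂ) (q : ℂ) k)) (f y - f ((q : ℂ) * y)) := by
      simpa only [hterm] using hshift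
    have huniq : y * f y = f y - f ((q : ℂ) * y) := (hy1.mul_left y).unique hs2
    linear_combination huniq
  -- bound on norms of arguments
  have hqnx : ∀ n : ℕ, ‖(q : ℂ) ^ n * x‖ < 1 := by
    intro n
    rw [norm_mul, norm_pow, Complex.norm_real, Real.norm_of_nonneg hq0.le]
    have h1 : q ^ n ≤ 1 := pow_le_one₀ hq0.le hq1.le
    nlinarith [norm_nonneg x, pow_nonneg hq0.le n]
  -- iterate the functional equation
  have key : ∀ n : ℕ, (∏ j ∈ Finset.range n, (1 - x * (q : ℂ) ^ j)) * f x = f ((q : ℂ) ^ n * x) := by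
    intro n
    induction n with
    | zero => simp
    | succ n ih =>
      have hstep := hfun ((q : ℂ) ^ n * x) (hqnx n)
      have harg : (q : ℂ) * ((q : ℂ) ^ n * x) = (q : ℂ) ^ (n + 1) * x := by ring
      rw [Finset.prod_range_succ, ← harg, hstep, ← ih]
      ring
  -- multipliability of the infinite product
  have hne0 : ∀ j : ℕ, ((1 : ℂ) - x * (q : ℂ) ^ j) ≠ 0 := by
    intro j
    have h : ‖x * (q : ℂ) ^ j‖ < 1 := by
      rw [mul_comm]; exact hqnx j
    rw [sub_ne_zero]
    intro h0
    rw [← h0] at h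
    simp at h
  have hlog : Summable fun j : ℕ => Complex.log (1 - x * (q : ℂ) ^ j) := by
    have hgeo : Summable (fun j : ℕ => (3 / 2 : ℝ) * (‖x‖ * q ^ j)) :=
      (((summable_geometric_of_lt_one hq0.le hq1).mul_left ‖x‖).mul_left _)
    apply Summable.of_norm_bounded_eventually_nat hgeo
    have hev : ∀ᶠ j : ℕ in Filter.atTop, ‖x‖ * q ^ j ≤ 1 / 2 := by
      have h := (tendsto_pow_atTop_nhds_zero_of_lt_one hq0.le hq1).const_mul ‖x‖
      rw [mul_zero] at h
      exact h.eventually_le_const one_half_pos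
    filter_upwards [hev] with j hj
    have hz : ‖-(x * (q : ℂ) ^ j)‖ ≤ 1 / 2 := by
      rw [norm_neg, norm_mul, norm_pow, Complex.norm_real, Real.norm_of_nonneg hq0.le]
      exact hj
    have hb := Complex.norm_log_one_add_half_le_self hz
    rw [← sub_eq_add_neg] at hb
    calc ‖Complex.log (1 - x * (q : ℂ) ^ j)‖ ≤ 3 / 2 * ‖-(x * (q : ℂ) ^ j)‖ := hb
      _ = 3 / 2 * (‖x‖ * q ^ j) := by
          rw [norm_neg, norm_mul, norm_pow, Complex.norm_real, Real.norm_of_nonneg hq0.le]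
  have hmult : Multipliable fun j : ℕ => (1 : ℂ) - x * (q : ℂ) ^ j :=
    Complex.multipliable_of_summable_log hlog
  have hProd : Filter.Tendsto (fun n => ∏ j ∈ Finset.range n, ((1 : ℂ) - x * (q : ℂ) ^ j))
      Filter.atTop (nhds (qPochInf (q : ℂ) x)) := by
    rw [qPochInf]
    exact hmult.hasProd.tendsto_prod_nat
  -- f (q^n x) → 1
  set S : ℝ := ∑' k : ℕ, ‖x‖ ^ (k + 1) / ∏ j ∈ Finset.range (k + 1), (1 - q ^ (j + 1)) with hS
  have hSsum : Summable (fun k : ℕ => ‖x‖ ^ (k + 1) / ∏ j ∈ Finset.range (k + 1), (1 - q ^ (j + 1))) :=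
    (summable_nat_add_iff (f := fun k : ℕ => ‖x‖ ^ k / ∏ j ∈ Finset.range k, (1 - q ^ (j + 1)))
      1).mpr (euler_summable_norm hq0 hq1 (norm_nonneg x) hnx)
  have htail : ∀ n : ℕ, ‖f ((q : ℂ) ^ n * x) - 1‖ ≤ q ^ n * S := by
    intro n
    have hyn := hqnx n
    have h1 : HasSum (fun k : ℕ => ((q : ℂ) ^ n * x) ^ (k + 1) / qPoch (q : ℂ) (q : ℂ) (k + 1))
        (f ((q : ℂ) ^ n * x) - 1) := by
      refine (hasSum_nat_add_iff
        (f := fun k : ℕ => ((q : ℂ) ^ n * x) ^ k / qPoch (q : ℂ) (q : ℂ) k) 1).mpr ?_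
      simpa [qPoch, hf] using (hsum _ hyn).hasSum
    have hnsum : Summable (fun k : ℕ => ‖((q : ℂ) ^ n * x) ^ (k + 1) / qPoch (q : ℂ) (q : ℂ) (k + 1)‖) := by
      simp only [euler_norm_term hq0 hq1]
      exact (summable_nat_add_iff
        (f := fun k : ℕ => ‖(q : ℂ) ^ n * x‖ ^ k / ∏ j ∈ Finset.range k, (1 - q ^ (j + 1)))
        1).mpr (euler_summable_norm hq0 hq1 (norm_nonneg _) hyn)
    have h2 : ‖f ((q : ℂ) ^ n * x) - 1‖
        ≤ ∑' k : ℕ, ‖((q : ℂ) ^ n * x) ^ (k + 1) / qPoch (q : ℂ) (q : ℂ) (k + 1)‖ := by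
      rw [← h1.tsum_eq]
      exact norm_tsum_le_tsum_norm hnsum
    refine h2.trans ?_
    rw [hS, ← tsum_mul_left]
    apply Summable.tsum_le_tsum _ hnsum (hSsum.mul_left _)
    intro k
    have hqle : q ^ (n * (k + 1)) ≤ q ^ n :=
      pow_le_pow_of_le_one hq0.le hq1.le (Nat.le_mul_of_pos_right n k.succ_pos)
    have hR := euler_R_pos hq0 hq1 (k + 1)
    have hnorm : ‖(q : ℂ) ^ n * x‖ = q ^ n * ‖x‖ := by
      rw [norm_mul, norm_pow, Complex.norm_real, Real.norm_of_nonneg hq0.le]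
    rw [euler_norm_term hq0 hq1, hnorm, mul_pow, ← pow_mul, mul_div_assoc]
    exact mul_le_mul_of_nonneg_right hqle (div_nonneg (by positivity) hR.le)
  have htends1 : Filter.Tendsto (fun n : ℕ => f ((q : ℂ) ^ n * x)) Filter.atTop (nhds 1) := by
    have h0 : Filter.Tendsto (fun n : ℕ => f ((q : ℂ) ^ n * x) - 1) Filter.atTop (nhds 0) := by
      rw [tendsto_zero_iff_norm_tendsto_zero]
      apply squeeze_zero (fun n => norm_nonneg _) htail
      simpa using (tendsto_pow_atTop_nhds_zero_of_lt_one hq0.le hq1).mul_const S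
    have := h0.add_const 1
    simpa using this
  have heq : qPochInf (q : ℂ) x * f x = 1 := by
    have h1 := hProd.mul_const (f x)
    have h2 : (fun n => (∏ j ∈ Finset.range n, ((1 : ℂ) - x * (q : ℂ) ^ j)) * f x)
        = fun n => f ((q : ℂ) ^ n * x) := funext key
    rw [h2] at h1
    exact tendsto_nhds_unique h1 htends1
  have hPne : qPochInf (q : ℂ) x ≠ 0 := left_ne_zero_of_mul_eq_one heq
  rw [eq_div_iff hPne]
  linear_combination heq
end

section
/- (Inverse Euler identity) For all complex x and 0 < q < 1, ∑_{k=0}^∞ (-1)^k q^{k(k-1)/2} x^k / (q;q)_k = (x;q)_∞. -/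
open Finset

open Filter Topology
set_option linter.unusedSectionVars false
set_option linter.deprecated false

noncomputable def euA (q : ℝ) (k : ℕ) : ℂ := (-1)^k * (q:ℂ)^(k.choose 2) / qPoch (q:ℂ) (q:ℂ) k

section aux
variable {q : ℝ} (hq0 : 0 < q) (hq1 : q < 1)
include hq0 hq1

lemma qpow_lt_one (j : ℕ) : q * q ^ j < 1 := by
  have := pow_lt_one₀ hq0.le hq1 (Nat.succ_ne_zero j)
  rwa [pow_succ'] at this

lemma qPoch_eq (k : ℕ) :
    qPoch (q:ℂ) (q:ℂ) k = ((∏ j ∈ range k, (1 - q * q ^ j) : ℝ) : ℂ) := by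
  rw [qPoch, Complex.ofReal_prod]
  exact Finset.prod_congr rfl fun j _ => by push_cast; ring

lemma rp_pos (k : ℕ) : 0 < ∏ j ∈ range k, (1 - q * q ^ j) :=
  Finset.prod_pos fun j _ => sub_pos.2 (qpow_lt_one hq0 hq1 j)

lemma qPoch_ne (k : ℕ) : qPoch (q:ℂ) (q:ℂ) k ≠ 0 := by
  rw [qPoch_eq hq0 hq1]
  exact_mod_cast (rp_pos hq0 hq1 k).ne'

lemma one_sub_qpow_ne (k : ℕ) : (1 : ℂ) - (q:ℂ) ^ (k+1) ≠ 0 := by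
  have h : (1:ℝ) - q ^ (k+1) ≠ 0 :=
    (sub_pos.2 (pow_lt_one₀ hq0.le hq1 (Nat.succ_ne_zero k))).ne'
  exact_mod_cast fun h' => h (by exact_mod_cast h')

lemma euA_zero : euA q 0 = 1 := by simp [euA, qPoch]

lemma euA_succ (k : ℕ) :
    euA q (k+1) = euA q k * (-(q:ℂ)^k / (1 - (q:ℂ)^(k+1))) := by
  have hP : qPoch (q:ℂ) (q:ℂ) (k+1) = qPoch (q:ℂ) (q:ℂ) k * (1 - (q:ℂ)^(k+1)) := by
    rw [qPoch, qPoch, Finset.prod_range_succ, pow_succ']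
  have hc : (k+1).choose 2 = k.choose 2 + k := by
    simp [Nat.choose_succ_succ, Nat.choose_one_right]; omega
  rw [euA, euA, hP, hc, pow_add]
  field_simp [qPoch_ne hq0 hq1, one_sub_qpow_ne hq0 hq1]
  ring
end aux

section aux2
variable {q : ℝ} (hq0 : 0 < q) (hq1 : q < 1)
include hq0 hq1

lemma euRatio (y : ℂ) (k : ℕ) :
    ‖euA q (k+1) * y^(k+1)‖ = (q^k * ‖y‖ / (1 - q^(k+1))) * ‖euA q k * y^k‖ := by
  have h1 : (1:ℂ) - (q:ℂ)^(k+1) = ((1 - q^(k+1) : ℝ) : ℂ) := by push_cast; ring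
  have h2 : (0:ℝ) < 1 - q^(k+1) := sub_pos.2 (pow_lt_one₀ hq0.le hq1 (Nat.succ_ne_zero k))
  have h3 : euA q k * (-(q:ℂ)^k / (1 - (q:ℂ)^(k+1))) * y^(k+1)
       = (euA q k * y^k) * (-((q:ℂ)^k * y) / (1 - (q:ℂ)^(k+1))) := by
    rw [pow_succ]; ring
  rw [euA_succ hq0 hq1, h3]
  simp only [norm_mul, norm_div, norm_neg, norm_pow, h1, Complex.norm_real,
    Real.norm_eq_abs, abs_of_pos h2, abs_of_pos hq0]
  ring

lemma euSummableNorm (y : ℂ) : Summable (fun k => ‖euA q k * y^k‖) := by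
  apply summable_of_ratio_norm_eventually_le (r := 1/2) (by norm_num)
  have hlim : Tendsto (fun n : ℕ => q^n * ‖y‖) atTop (𝓝 0) := by
    simpa using (tendsto_pow_atTop_nhds_zero_of_lt_one hq0.le hq1).mul_const ‖y‖
  have hev : ∀ᶠ n : ℕ in atTop, q^n * ‖y‖ ≤ (1-q)/2 :=
    (hlim.eventually_lt_const (by linarith)).mono (fun n h => h.le)
  filter_upwards [hev] with n hn
  rw [Real.norm_eq_abs, Real.norm_eq_abs, abs_of_nonneg (norm_nonneg _),
    abs_of_nonneg (norm_nonneg _), euRatio hq0 hq1]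
  have h2 : (0:ℝ) < 1 - q^(n+1) := sub_pos.2 (pow_lt_one₀ hq0.le hq1 (Nat.succ_ne_zero n))
  have h4 : q^n * ‖y‖ / (1 - q^(n+1)) ≤ 1/2 := by
    rw [div_le_iff₀ h2]
    have : q^(n+1) ≤ q := by
      calc q^(n+1) = q * q^n := (pow_succ' q n)
      _ ≤ q * 1 := by nlinarith [pow_nonneg hq0.le n, pow_le_one₀ hq0.le hq1.le (n:=n)]
      _ = q := mul_one q
    nlinarith
  have := norm_nonneg (euA q n * y^n)
  nlinarith

end aux2

section aux3
variable {q : ℝ} (hq0 : 0 < q) (hq1 : q < 1)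
include hq0 hq1

lemma euSummable (y : ℂ) : Summable (fun k => euA q k * y^k) :=
  (euSummableNorm hq0 hq1 y).of_norm

lemma euFunEq (y : ℂ) :
    (∑' k : ℕ, euA q k * y^k) = (1 - y) * ∑' k : ℕ, euA q k * ((q:ℂ)*y)^k := by
  have h1 := euSummable hq0 hq1 y
  have h2 := euSummable hq0 hq1 ((q:ℂ)*y)
  have hg : Summable (fun k => euA q k * y^k - euA q k * ((q:ℂ)*y)^k) := h1.sub h2
  have key : (∑' k : ℕ, (euA q k * y^k - euA q k * ((q:ℂ)*y)^k))
      = -y * ∑' k : ℕ, euA q k * ((q:ℂ)*y)^k := by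
    rw [Summable.tsum_eq_zero_add hg]
    have h0 : euA q 0 * y^0 - euA q 0 * ((q:ℂ)*y)^0 = 0 := by simp
    rw [h0, zero_add]
    have hterm : ∀ k : ℕ, euA q (k+1) * y^(k+1) - euA q (k+1) * ((q:ℂ)*y)^(k+1)
        = -y * (euA q k * ((q:ℂ)*y)^k) := by
      intro k
      rw [euA_succ hq0 hq1]
      have hne := one_sub_qpow_ne hq0 hq1 k
      field_simp
      ring
    rw [tsum_congr hterm, tsum_mul_left]
  rw [Summable.tsum_sub h1 h2] at key
  linear_combination key

lemma euIter (x : ℂ) (n : ℕ) :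
    (∑' k : ℕ, euA q k * x^k) = qPoch (q:ℂ) x n * ∑' k : ℕ, euA q k * ((q:ℂ)^n * x)^k := by
  induction n with
  | zero => simp [qPoch]
  | succ n ih =>
    have hq : qPoch (q:ℂ) x (n+1) = qPoch (q:ℂ) x n * (1 - x * (q:ℂ)^n) := by
      rw [qPoch, qPoch, Finset.prod_range_succ]
    have h : (q:ℂ) * ((q:ℂ)^n * x) = (q:ℂ)^(n+1) * x := by rw [pow_succ]; ring
    rw [ih, euFunEq hq0 hq1 ((q:ℂ)^n * x), hq, h]
    ring

set_option maxHeartbeats 2000000 in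
lemma euTail (x : ℂ) :
    Tendsto (fun n : ℕ => ∑' k : ℕ, euA q k * ((q:ℂ)^n * x)^k) atTop (𝓝 1) := by
  set R : ℝ := ‖x‖ + 1 with hR
  have hR1 : (1:ℝ) ≤ R := by rw [hR]; linarith [norm_nonneg x]
  have hb : Summable (fun k => ‖euA q k * ((R:ℂ))^k‖) := euSummableNorm hq0 hq1 _
  have hbs : Summable (fun k => ‖euA q (k+1) * (R:ℂ)^(k+1)‖) :=
    (summable_nat_add_iff 1).2 hb
  set C : ℝ := ∑' k : ℕ, ‖euA q (k+1) * (R:ℂ)^(k+1)‖ with hC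
  have hbound : ∀ n : ℕ, ‖(∑' k : ℕ, euA q k * ((q:ℂ)^n * x)^k) - 1‖ ≤ q^n * ‖x‖ * C := by
    intro n
    set y := (q:ℂ)^n * x with hy
    have hyn : ‖y‖ = q^n * ‖x‖ := by
      rw [hy, norm_mul, norm_pow, Complex.norm_real, Real.norm_eq_abs, abs_of_pos hq0]
    have hyR : ‖y‖ ≤ ‖x‖ := by
      rw [hyn]
      nlinarith [pow_le_one₀ hq0.le hq1.le (n:=n), norm_nonneg x, pow_nonneg hq0.le n]
    have hs := euSummable hq0 hq1 y
    have h1 : (∑' k : ℕ, euA q k * y^k) - 1 = ∑' k : ℕ, euA q (k+1) * y^(k+1) := by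
      rw [Summable.tsum_eq_zero_add hs, euA_zero hq0 hq1]
      simp
    rw [h1]
    have hsn : Summable (fun k => ‖euA q (k+1) * y^(k+1)‖) :=
      (summable_nat_add_iff 1).2 (euSummableNorm hq0 hq1 y)
    have hterm : ∀ k : ℕ, ‖euA q (k+1) * y^(k+1)‖ ≤ ‖y‖ * ‖euA q (k+1) * (R:ℂ)^(k+1)‖ := by
      intro k
      have hnormR : ‖euA q (k+1) * (R:ℂ)^(k+1)‖ = ‖euA q (k+1)‖ * R^(k+1) := by
        rw [norm_mul, norm_pow, Complex.norm_real, Real.norm_eq_abs,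
          abs_of_pos (by linarith : (0:ℝ) < R)]
      rw [hnormR, norm_mul, norm_pow]
      have hyR' : ‖y‖ ≤ R := by linarith [hyR, (le_add_of_nonneg_right zero_le_one : ‖x‖ ≤ ‖x‖ + 1)]
      have h5 : ‖y‖^(k+1) ≤ ‖y‖ * R^(k+1) := by
        rw [pow_succ']
        have : ‖y‖^k ≤ R^(k+1) := by
          calc ‖y‖^k ≤ R^k := pow_le_pow_left₀ (norm_nonneg y) hyR' k
          _ ≤ R^(k+1) := pow_le_pow_right₀ hR1 (Nat.le_succ k)
        nlinarith [norm_nonneg y]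
      nlinarith [norm_nonneg (euA q (k+1)), pow_nonneg (norm_nonneg y) (k+1)]
    calc ‖∑' k : ℕ, euA q (k+1) * y^(k+1)‖ ≤ ∑' k : ℕ, ‖euA q (k+1) * y^(k+1)‖ :=
          norm_tsum_le_tsum_norm hsn
    _ ≤ ∑' k : ℕ, ‖y‖ * ‖euA q (k+1) * (R:ℂ)^(k+1)‖ :=
          Summable.tsum_le_tsum hterm hsn (hbs.mul_left ‖y‖)
    _ = ‖y‖ * C := tsum_mul_left
    _ = q^n * ‖x‖ * C := by rw [hyn]
  have h0 : Tendsto (fun n : ℕ => q^n * ‖x‖ * C) atTop (𝓝 0) := by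
    simpa using (((tendsto_pow_atTop_nhds_zero_of_lt_one hq0.le hq1).mul_const ‖x‖).mul_const C)
  rw [tendsto_iff_norm_sub_tendsto_zero]
  exact squeeze_zero (fun n => norm_nonneg _) hbound h0

end aux3

lemma euMultipliable {q : ℝ} (hq0 : 0 < q) (hq1 : q < 1) (x : ℂ) :
    Multipliable (fun j : ℕ => 1 - x * (q:ℂ)^j) := by
  by_cases h : ∃ j : ℕ, 1 - x * (q:ℂ)^j = 0
  · obtain ⟨j0, hj0⟩ := h
    refine ⟨0, ?_⟩
    have hev : ∀ᶠ s : Finset ℕ in atTop, (0:ℂ) = ∏ j ∈ s, (1 - x*(q:ℂ)^j) := by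
      filter_upwards [eventually_ge_atTop ({j0} : Finset ℕ)] with s hsub
      exact (Finset.prod_eq_zero (hsub (Finset.mem_singleton_self j0)) hj0).symm
    exact tendsto_const_nhds.congr' hev
  · push_neg at h
    refine Complex.multipliable_of_summable_log ?_
    apply Summable.of_norm_bounded_eventually_nat (g := fun n => 3/2 * (‖x‖ * q^n))
    · exact ((summable_geometric_of_lt_one hq0.le hq1).mul_left ‖x‖).mul_left (3/2)
    · have hlim : Tendsto (fun n : ℕ => ‖x‖ * q^n) atTop (𝓝 0) := by
        simpa using (tendsto_pow_atTop_nhds_zero_of_lt_one hq0.le hq1).const_mul ‖x‖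
      filter_upwards [hlim.eventually_lt_const (by norm_num : (0:ℝ) < 1/2)] with n hn
      have hz : ‖-(x*(q:ℂ)^n)‖ ≤ 1/2 := by
        rw [norm_neg, norm_mul, norm_pow, Complex.norm_real, Real.norm_eq_abs, abs_of_pos hq0]
        exact hn.le
      have hlog := Complex.norm_log_one_add_half_le_self hz
      have he : (1:ℂ) - x*(q:ℂ)^n = 1 + -(x*(q:ℂ)^n) := by ring
      rw [he]
      refine le_trans hlog (le_of_eq ?_)
      rw [norm_neg, norm_mul, norm_pow, Complex.norm_real, Real.norm_eq_abs, abs_of_pos hq0]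

theorem stmt5 (q : ℝ) (hq0 : 0 < q) (hq1 : q < 1) (x : ℂ) :
    ∑' k : ℕ, (-1) ^ k * (q : ℂ) ^ k.choose 2 * x ^ k / qPoch (q : ℂ) (q : ℂ) k =
      qPochInf (q : ℂ) x := by
  have hS : (∑' k : ℕ, (-1)^k * (q:ℂ)^(k.choose 2) * x^k / qPoch (q:ℂ) (q:ℂ) k)
      = ∑' k : ℕ, euA q k * x^k := tsum_congr fun k => by rw [euA]; ring
  rw [hS]
  have hm := euMultipliable hq0 hq1 x
  have hprod : Tendsto (fun n : ℕ => qPoch (q:ℂ) x n) atTop (𝓝 (qPochInf (q:ℂ) x)) :=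
    HasProd.tendsto_prod_nat hm.hasProd
  have hlim : Tendsto
      (fun n : ℕ => qPoch (q:ℂ) x n * ∑' k : ℕ, euA q k * ((q:ℂ)^n*x)^k) atTop
      (𝓝 (qPochInf (q:ℂ) x * 1)) := hprod.mul (euTail hq0 hq1 x)
  rw [mul_one] at hlim
  exact tendsto_nhds_unique
    ((tendsto_const_nhds (x := ∑' k : ℕ, euA q k * x^k)).congr
      (fun n => euIter hq0 hq1 x n)) hlim
end

section
/- (Generating function for generalized Cauchy polynomials) For |xt| < 1, ∑_{n=0}^∞ p_n(x,y,a) t^n/(q;q)_n = (1/(xt;q)_∞) · ₁Φ₁(a; 0; q, yt), where p_n(x,y,a) := ∑_{k=0}^n \binom{n}{k}_q (-1)^k q^{\binom{k}{2}} (a;q)_k x^{n-k} y^k and ₁Φ₁(a;0;q,z) := ∑_{m=0}^∞ (-1)^m q^{\binom{m}{2}} (a;q)_m z^m/(q;q)_m. -/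
open Finset

open Filter Topology

section AuxLemmas


lemma one_sub_qpow_pos {q : ℝ} (hq0 : 0 < q) (hq1 : q < 1) (n : ℕ) : 0 < 1 - q * q ^ n := by
  have h : q * q ^ n < 1 := by
    calc q * q ^ n = q ^ (n + 1) := by ring
    _ < 1 := pow_lt_one₀ hq0.le hq1 (Nat.succ_ne_zero n)
  linarith

lemma factor_eq {q : ℝ} (n : ℕ) : (1 : ℂ) - (q : ℂ) * (q : ℂ) ^ n = ((1 - q * q ^ n : ℝ) : ℂ) := by
  push_cast; ring

lemma factor_ne {q : ℝ} (hq0 : 0 < q) (hq1 : q < 1) (n : ℕ) :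
    (1 : ℂ) - (q : ℂ) * (q : ℂ) ^ n ≠ 0 := by
  rw [factor_eq]
  exact_mod_cast (one_sub_qpow_pos hq0 hq1 n).ne'

lemma norm_factor {q : ℝ} (hq0 : 0 < q) (hq1 : q < 1) (n : ℕ) :
    ‖(1 : ℂ) - (q : ℂ) * (q : ℂ) ^ n‖ = 1 - q * q ^ n := by
  rw [factor_eq, Complex.norm_real, Real.norm_of_nonneg (one_sub_qpow_pos hq0 hq1 n).le]

lemma qq_ne {q : ℝ} (hq0 : 0 < q) (hq1 : q < 1) (n : ℕ) : qPoch (q : ℂ) (q : ℂ) n ≠ 0 :=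
  Finset.prod_ne_zero_iff.2 fun j _ => factor_ne hq0 hq1 j

lemma qq_succ (q b : ℂ) (n : ℕ) :
    qPoch q b (n + 1) = qPoch q b n * (1 - b * q ^ n) :=
  Finset.prod_range_succ _ _

lemma summable_norm_E {q : ℝ} (hq0 : 0 < q) (hq1 : q < 1) {z : ℂ} (hz : ‖z‖ < 1) :
    Summable fun n => ‖z ^ n / qPoch (q : ℂ) (q : ℂ) n‖ := by
  apply summable_of_ratio_norm_eventually_le (r := (1 + ‖z‖) / 2) (by linarith)
  have key : ∀ n : ℕ, ‖z ^ (n + 1) / qPoch (q : ℂ) (q : ℂ) (n + 1)‖ =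
      (‖z‖ / (1 - q * q ^ n)) * ‖z ^ n / qPoch (q : ℂ) (q : ℂ) n‖ := by
    intro n
    have h1 : ‖qPoch (q : ℂ) (q : ℂ) n‖ ≠ 0 := norm_ne_zero_iff.2 (qq_ne hq0 hq1 n)
    have h2 : (1 - q * q ^ n) ≠ 0 := (one_sub_qpow_pos hq0 hq1 n).ne'
    rw [qq_succ, pow_succ, norm_div, norm_div, norm_mul, norm_mul,
      norm_factor hq0 hq1]
    field_simp
  have htend : Tendsto (fun n : ℕ => ‖z‖ / (1 - q * q ^ n)) atTop (𝓝 (‖z‖ / (1 - q * 0))) := by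
    apply Tendsto.div tendsto_const_nhds
    · exact tendsto_const_nhds.sub ((tendsto_pow_atTop_nhds_zero_of_lt_one hq0.le hq1).const_mul q)
    · norm_num
  rw [mul_zero, sub_zero, div_one] at htend
  filter_upwards [htend.eventually_lt_const (by linarith : ‖z‖ < (1 + ‖z‖) / 2)] with n hn
  rw [Real.norm_of_nonneg (norm_nonneg _), Real.norm_of_nonneg (norm_nonneg _), key n]
  exact mul_le_mul_of_nonneg_right hn.le (norm_nonneg _)

lemma summable_norm_G {q : ℝ} (hq0 : 0 < q) (hq1 : q < 1) (a z : ℂ) :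
    Summable fun m =>
      ‖(-1 : ℂ) ^ m * (q : ℂ) ^ m.choose 2 * qPoch (q : ℂ) a m * z ^ m / qPoch (q : ℂ) (q : ℂ) m‖ := by
  apply summable_of_ratio_norm_eventually_le (r := 1 / 2) (by norm_num)
  have key : ∀ m : ℕ,
      ‖(-1 : ℂ) ^ (m + 1) * (q : ℂ) ^ (m + 1).choose 2 * qPoch (q : ℂ) a (m + 1) * z ^ (m + 1) /
        qPoch (q : ℂ) (q : ℂ) (m + 1)‖ =
      (‖1 - a * (q : ℂ) ^ m‖ * (q ^ m * ‖z‖) / (1 - q * q ^ m)) *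
        ‖(-1 : ℂ) ^ m * (q : ℂ) ^ m.choose 2 * qPoch (q : ℂ) a m * z ^ m /
          qPoch (q : ℂ) (q : ℂ) m‖ := by
    intro m
    have hch : (m + 1).choose 2 = m.choose 2 + m := by
      rw [Nat.choose_succ_succ]
      simp [Nat.choose_one_right, Nat.add_comm]
    have h1 : ‖qPoch (q : ℂ) (q : ℂ) m‖ ≠ 0 := norm_ne_zero_iff.2 (qq_ne hq0 hq1 m)
    have h2 : (1 - q * q ^ m) ≠ 0 := (one_sub_qpow_pos hq0 hq1 m).ne'
    have hq : ‖(q : ℂ) ^ m‖ = q ^ m := by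
      rw [norm_pow, Complex.norm_real, Real.norm_of_nonneg hq0.le]
    rw [hch, qq_succ, qq_succ, pow_succ (-1 : ℂ), pow_succ z, pow_add]
    simp only [norm_div, norm_mul, norm_neg, norm_one, norm_factor hq0 hq1, hq]
    field_simp
  have htend : Tendsto
      (fun m : ℕ => ‖1 - a * (q : ℂ) ^ m‖ * (q ^ m * ‖z‖) / (1 - q * q ^ m)) atTop
      (𝓝 (‖1 - a * 0‖ * (0 * ‖z‖) / (1 - q * 0))) := by
    have hQ : Tendsto (fun m : ℕ => (q : ℂ) ^ m) atTop (𝓝 0) := by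
      apply tendsto_pow_atTop_nhds_zero_of_norm_lt_one
      rw [Complex.norm_real, Real.norm_of_nonneg hq0.le]; exact hq1
    have hq' : Tendsto (fun m : ℕ => q ^ m) atTop (𝓝 0) :=
      tendsto_pow_atTop_nhds_zero_of_lt_one hq0.le hq1
    exact ((continuous_norm.tendsto _).comp (tendsto_const_nhds.sub (hQ.const_mul a))).mul
      (hq'.mul_const ‖z‖) |>.div
      (tendsto_const_nhds.sub (hq'.const_mul q)) (by norm_num)
  rw [mul_zero, sub_zero, zero_mul, mul_zero, zero_div] at htend
  filter_upwards [htend.eventually_lt_const (by norm_num : (0 : ℝ) < 1 / 2)] with m hm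
  rw [Real.norm_of_nonneg (norm_nonneg _), Real.norm_of_nonneg (norm_nonneg _), key m]
  exact mul_le_mul_of_nonneg_right hm.le (norm_nonneg _)


lemma norm_mul_qpow {q : ℝ} (hq0 : 0 < q) (hq1 : q < 1) (z : ℂ) (j : ℕ) :
    ‖z * (q : ℂ) ^ j‖ = ‖z‖ * q ^ j := by
  rw [norm_mul, norm_pow, Complex.norm_real, Real.norm_of_nonneg hq0.le]

lemma norm_mul_qpow_lt {q : ℝ} (hq0 : 0 < q) (hq1 : q < 1) {z : ℂ} (hz : ‖z‖ < 1) (j : ℕ) :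
    ‖z * (q : ℂ) ^ j‖ < 1 := by
  rw [norm_mul_qpow hq0 hq1]
  nlinarith [pow_le_one₀ (n := j) hq0.le hq1.le, pow_nonneg hq0.le j, norm_nonneg z]

lemma funeq_s12 {q : ℝ} (hq0 : 0 < q) (hq1 : q < 1) {z : ℂ} (hz : ‖z‖ < 1) :
    (∑' n : ℕ, ((q : ℂ) * z) ^ n / qPoch (q : ℂ) (q : ℂ) n) =
      (1 - z) * ∑' n : ℕ, z ^ n / qPoch (q : ℂ) (q : ℂ) n := by
  have hqz : ‖(q : ℂ) * z‖ < 1 := by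
    rw [mul_comm]
    simpa using norm_mul_qpow_lt hq0 hq1 hz 1
  have hE : Summable fun n : ℕ => z ^ n / qPoch (q : ℂ) (q : ℂ) n :=
    (summable_norm_E hq0 hq1 hz).of_norm
  have hEq : Summable fun n : ℕ => ((q : ℂ) * z) ^ n / qPoch (q : ℂ) (q : ℂ) n :=
    (summable_norm_E hq0 hq1 hqz).of_norm
  set d : ℕ → ℂ := fun n => if n = 0 then 0 else z * (z ^ (n - 1) / qPoch (q : ℂ) (q : ℂ) (n - 1))
    with hd_def
  have hsub : ∀ n : ℕ, z ^ n / qPoch (q : ℂ) (q : ℂ) n -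
      ((q : ℂ) * z) ^ n / qPoch (q : ℂ) (q : ℂ) n = d n := by
    intro n
    cases n with
    | zero => simp [hd_def]
    | succ n =>
      have h1 := qq_ne hq0 hq1 n
      have h2 := factor_ne hq0 hq1 n
      simp only [hd_def, Nat.succ_ne_zero, if_false, Nat.add_sub_cancel]
      rw [qq_succ, mul_pow, pow_succ (q : ℂ), pow_succ z]
      field_simp
  have hd1 : Summable fun n : ℕ => d (n + 1) := by
    simpa [hd_def] using hE.mul_left z
  have hd : Summable d := (summable_nat_add_iff 1).mp hd1
  have htsum_d : ∑' n, d n = z * ∑' n : ℕ, z ^ n / qPoch (q : ℂ) (q : ℂ) n := by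
    rw [Summable.tsum_eq_zero_add hd]
    simp [hd_def, tsum_mul_left]
  have h5 : (∑' n : ℕ, z ^ n / qPoch (q : ℂ) (q : ℂ) n) -
      (∑' n : ℕ, ((q : ℂ) * z) ^ n / qPoch (q : ℂ) (q : ℂ) n) =
      z * ∑' n : ℕ, z ^ n / qPoch (q : ℂ) (q : ℂ) n := by
    rw [← Summable.tsum_sub hE hEq]
    rw [← htsum_d]
    exact tsum_congr hsub
  linear_combination -h5

lemma iterate_eq {q : ℝ} (hq0 : 0 < q) (hq1 : q < 1) {z : ℂ} (hz : ‖z‖ < 1) (N : ℕ) :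
    (∑' n : ℕ, ((q : ℂ) ^ N * z) ^ n / qPoch (q : ℂ) (q : ℂ) n) =
      (∏ j ∈ range N, (1 - z * (q : ℂ) ^ j)) * ∑' n : ℕ, z ^ n / qPoch (q : ℂ) (q : ℂ) n := by
  induction N with
  | zero => simp
  | succ N ih =>
    have hzN : ‖(q : ℂ) ^ N * z‖ < 1 := by
      rw [mul_comm]; exact norm_mul_qpow_lt hq0 hq1 hz N
    have h := funeq_s12 hq0 hq1 hzN
    rw [show ((q : ℂ) ^ (N + 1) * z) = (q : ℂ) * ((q : ℂ) ^ N * z) by ring]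
    rw [h, ih, Finset.prod_range_succ]
    ring

lemma multipliable_P {q : ℝ} (hq0 : 0 < q) (hq1 : q < 1) {z : ℂ} (hz : ‖z‖ < 1) :
    Multipliable fun j : ℕ => 1 - z * (q : ℂ) ^ j := by
  have hne : ∀ j : ℕ, (1 : ℂ) - z * (q : ℂ) ^ j ≠ 0 := by
    intro j h
    rw [sub_eq_zero] at h
    have := norm_mul_qpow_lt hq0 hq1 hz j
    rw [← h] at this
    simp at this
  have hlog : Summable fun j : ℕ => Complex.log (1 - z * (q : ℂ) ^ j) := by
    apply Summable.of_norm_bounded_eventually_nat (g := fun j => 3 / 2 * ‖z‖ * q ^ j)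
      ((summable_geometric_of_lt_one hq0.le hq1).mul_left (3 / 2 * ‖z‖))
    have hsmall : ∀ᶠ j : ℕ in atTop, ‖z‖ * q ^ j ≤ 1 / 2 := by
      have : Tendsto (fun j : ℕ => ‖z‖ * q ^ j) atTop (𝓝 (‖z‖ * 0)) :=
        (tendsto_pow_atTop_nhds_zero_of_lt_one hq0.le hq1).const_mul ‖z‖
      rw [mul_zero] at this
      exact this.eventually_le_const (by norm_num)
    filter_upwards [hsmall] with j hj
    have h1 : ‖-(z * (q : ℂ) ^ j)‖ ≤ 1 / 2 := by
      rw [norm_neg, norm_mul_qpow hq0 hq1]; exact hj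
    have h2 := Complex.norm_log_one_add_half_le_self h1
    rw [show (1 : ℂ) + -(z * (q : ℂ) ^ j) = 1 - z * (q : ℂ) ^ j by ring] at h2
    rw [norm_neg, norm_mul_qpow hq0 hq1] at h2
    calc ‖Complex.log (1 - z * (q : ℂ) ^ j)‖ ≤ 3 / 2 * (‖z‖ * q ^ j) := h2
    _ = 3 / 2 * ‖z‖ * q ^ j := by ring
  exact Complex.multipliable_of_summable_log hlog

lemma euler {q : ℝ} (hq0 : 0 < q) (hq1 : q < 1) {z : ℂ} (hz : ‖z‖ < 1) :
    qPochInf (q : ℂ) z * ∑' n : ℕ, z ^ n / qPoch (q : ℂ) (q : ℂ) n = 1 := by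
  have hMul := multipliable_P hq0 hq1 hz
  have hL1 : Tendsto (fun N => ∏ j ∈ range N, (1 - z * (q : ℂ) ^ j)) atTop
      (𝓝 (qPochInf (q : ℂ) z)) := hMul.hasProd.tendsto_prod_nat
  have hQ : Tendsto (fun N : ℕ => (q : ℂ) ^ N) atTop (𝓝 0) := by
    apply tendsto_pow_atTop_nhds_zero_of_norm_lt_one
    rw [Complex.norm_real, Real.norm_of_nonneg hq0.le]; exact hq1
  have hL2 : Tendsto (fun N : ℕ => ∑' n : ℕ, ((q : ℂ) ^ N * z) ^ n / qPoch (q : ℂ) (q : ℂ) n)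
      atTop (𝓝 1) := by
    have hab : ∀ n : ℕ, Tendsto (fun N : ℕ => ((q : ℂ) ^ N * z) ^ n / qPoch (q : ℂ) (q : ℂ) n)
        atTop (𝓝 (if n = 0 then 1 else 0)) := by
      intro n
      cases n with
      | zero => simpa [qPoch] using (tendsto_const_nhds : Tendsto (fun _ : ℕ => (1 : ℂ)) atTop _)
      | succ n =>
        have := ((hQ.mul_const z).pow (n + 1)).div_const (qPoch (q : ℂ) (q : ℂ) (n + 1))
        simpa using this
    have hbound : ∀ᶠ N : ℕ in atTop, ∀ n : ℕ,
        ‖((q : ℂ) ^ N * z) ^ n / qPoch (q : ℂ) (q : ℂ) n‖ ≤ ‖z ^ n / qPoch (q : ℂ) (q : ℂ) n‖ := by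
      filter_upwards with N n
      rw [norm_div, norm_div, norm_pow, norm_pow]
      gcongr
      rw [mul_comm, norm_mul_qpow hq0 hq1]
      nlinarith [pow_le_one₀ (n := N) hq0.le hq1.le, pow_nonneg hq0.le N, norm_nonneg z]
    have h := tendsto_tsum_of_dominated_convergence (summable_norm_E hq0 hq1 hz) hab hbound
    rwa [tsum_ite_eq 0 (fun _ => (1 : ℂ))] at h
  have hL3 : Tendsto (fun N : ℕ => (∏ j ∈ range N, (1 - z * (q : ℂ) ^ j)) *
      ∑' n : ℕ, z ^ n / qPoch (q : ℂ) (q : ℂ) n) atTop (𝓝 1) :=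
    hL2.congr fun N => iterate_eq hq0 hq1 hz N
  exact tendsto_nhds_unique (hL1.mul_const _) hL3

lemma genCauchy_term {q : ℝ} (hq0 : 0 < q) (hq1 : q < 1) (a x y t : ℂ) (n : ℕ) :
    genCauchy (q : ℂ) a x y n * t ^ n / qPoch (q : ℂ) (q : ℂ) n =
      ∑ k ∈ range (n + 1), ((x * t) ^ k / qPoch (q : ℂ) (q : ℂ) k) *
        ((-1) ^ (n - k) * (q : ℂ) ^ (n - k).choose 2 * qPoch (q : ℂ) a (n - k) *
          (y * t) ^ (n - k) / qPoch (q : ℂ) (q : ℂ) (n - k)) := by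
  have step1 : genCauchy (q : ℂ) a x y n * t ^ n / qPoch (q : ℂ) (q : ℂ) n =
      ∑ k ∈ range (n + 1), ((x * t) ^ (n - k) / qPoch (q : ℂ) (q : ℂ) (n - k)) *
        ((-1) ^ k * (q : ℂ) ^ k.choose 2 * qPoch (q : ℂ) a k *
          (y * t) ^ k / qPoch (q : ℂ) (q : ℂ) k) := by
    rw [genCauchy, Finset.sum_mul, Finset.sum_div]
    refine Finset.sum_congr rfl fun k hk => ?_
    have hkn : k ≤ n := Nat.lt_succ_iff.mp (Finset.mem_range.mp hk)
    rw [qBinom]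
    rw [show t ^ n = t ^ (n - k) * t ^ k by rw [← pow_add, Nat.sub_add_cancel hkn]]
    rw [mul_pow, mul_pow]
    field_simp [qq_ne hq0 hq1]
  rw [step1, ← Finset.sum_range_reflect]
  refine Finset.sum_congr rfl fun j hj => ?_
  have hjn : j ≤ n := Nat.lt_succ_iff.mp (Finset.mem_range.mp hj)
  simp only [Nat.add_sub_cancel]
  rw [Nat.sub_sub_self hjn]

end AuxLemmas

theorem stmt12 (q : ℝ) (hq0 : 0 < q) (hq1 : q < 1) (a x y t : ℂ)
    (hxt : ‖x * t‖ < 1) :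
    ∑' n : ℕ, genCauchy (q : ℂ) a x y n * t ^ n / qPoch (q : ℂ) (q : ℂ) n =
      1 / qPochInf (q : ℂ) (x * t) * phi11 (q : ℂ) a (y * t) := by

  have hxt' : ‖x * t‖ < 1 := hxt
  have hf := summable_norm_E hq0 hq1 hxt'
  have hg := summable_norm_G hq0 hq1 a (y * t)
  calc ∑' n : ℕ, genCauchy (q : ℂ) a x y n * t ^ n / qPoch (q : ℂ) (q : ℂ) n
      = ∑' n : ℕ, ∑ k ∈ range (n + 1), ((x * t) ^ k / qPoch (q : ℂ) (q : ℂ) k) *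
          ((-1) ^ (n - k) * (q : ℂ) ^ (n - k).choose 2 * qPoch (q : ℂ) a (n - k) *
            (y * t) ^ (n - k) / qPoch (q : ℂ) (q : ℂ) (n - k)) :=
        tsum_congr fun n => genCauchy_term hq0 hq1 a x y t n
    _ = (∑' n : ℕ, (x * t) ^ n / qPoch (q : ℂ) (q : ℂ) n) *
          ∑' m : ℕ, (-1) ^ m * (q : ℂ) ^ m.choose 2 * qPoch (q : ℂ) a m *
            (y * t) ^ m / qPoch (q : ℂ) (q : ℂ) m :=
        (tsum_mul_tsum_eq_tsum_sum_range_of_summable_norm hf hg).symm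
    _ = 1 / qPochInf (q : ℂ) (x * t) * phi11 (q : ℂ) a (y * t) := by
        rw [phi11]
        congr 1
        exact eq_one_div_of_mul_eq_one_right (euler hq0 hq1 hxt')
end

section
/- Let θ_{xy} be the homogeneous q-difference operator θ_{xy} f(x,y) := (f(q^{-1}x, y) − f(x, qy))/(q^{-1}x − y). Then for all k ≤ n, θ_{xy}^k p_n(y,x) = (−1)^k ((q;q)_n/(q;q)_{n−k}) p_{n−k}(y,x), where p_m(y,x) := ∏_{j=0}^{m−1}(y − q^j x). -/
open Finset

lemma poch_ne_s14 (q : ℝ) (hq0 : 0 < q) (hq1 : q < 1) (m : ℕ) : qPoch (q:ℂ) (q:ℂ) m ≠ 0 := by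
  unfold qPoch
  rw [Finset.prod_ne_zero_iff]
  intro j _
  have h1 : q * q ^ j < 1 := by
    have hp : q ^ j ≤ 1 := pow_le_one₀ hq0.le hq1.le
    nlinarith
  have : ((1 - q * q ^ j : ℝ) : ℂ) ≠ 0 := by
    exact_mod_cast (by linarith : (1 - q * q ^ j : ℝ) ≠ 0)
  simpa [sub_ne_zero] using this

lemma cauchyA (q : ℂ) (hq : q ≠ 0) (x y : ℂ) (M : ℕ) :
    cauchyP q (q * y) x M = q ^ M * cauchyP q y (q⁻¹ * x) M := by
  unfold cauchyP
  calc ∏ j ∈ Finset.range M, (q * y - q ^ j * x)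
      = ∏ j ∈ Finset.range M, (q * (y - q ^ j * (q⁻¹ * x))) := by
        apply Finset.prod_congr rfl
        intro j _
        field_simp
    _ = q ^ M * ∏ j ∈ Finset.range M, (y - q ^ j * (q⁻¹ * x)) := by
        rw [Finset.prod_mul_distrib, Finset.prod_const, Finset.card_range]

lemma cauchyB (q : ℂ) (hq : q ≠ 0) (x y : ℂ) (M : ℕ) :
    cauchyP q y (q⁻¹ * x) (M + 1) = (y - q⁻¹ * x) * cauchyP q y x M := by
  unfold cauchyP
  rw [Finset.prod_range_succ', mul_comm]
  congr 1
  · rw [pow_zero]; ring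
  · exact Finset.prod_congr rfl fun j _ => by field_simp; ring

theorem stmt14 (q : ℝ) (hq0 : 0 < q) (hq1 : q < 1) (n k : ℕ) (hk : k ≤ n) (x y : ℂ)
    (hxy : ∀ m : ℤ, x ≠ (q : ℂ) ^ m * y) :
    (qTheta (q : ℂ))^[k] (fun u v => cauchyP (q : ℂ) v u n) x y =
      (-1) ^ k * (qPoch (q : ℂ) (q : ℂ) n / qPoch (q : ℂ) (q : ℂ) (n - k)) *
        cauchyP (q : ℂ) y x (n - k) := by
  have hq0' : (q : ℂ) ≠ 0 := by exact_mod_cast hq0.ne'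
  induction k generalizing x y with
  | zero =>
      simp [div_self (poch_ne_s14 q hq0 hq1 n)]
  | succ k ih =>
      have hk' : k ≤ n := Nat.le_of_succ_le hk
      have hs1 : ∀ m : ℤ, (q:ℂ)⁻¹ * x ≠ (q : ℂ) ^ m * y := by
        intro m h
        apply hxy (m + 1)
        have hx : x = q * ((q:ℂ)⁻¹ * x) := by field_simp
        rw [hx, h, zpow_add₀ hq0', zpow_one]; ring
      have hs2 : ∀ m : ℤ, x ≠ (q : ℂ) ^ m * ((q:ℂ) * y) := by
        intro m h
        apply hxy (m + 1)
        rw [h, zpow_add₀ hq0', zpow_one]; ring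
      have hden : (q:ℂ)⁻¹ * x - y ≠ 0 := by
        intro h
        apply hxy 1
        rw [sub_eq_zero] at h
        rw [zpow_one, ← h]; field_simp
      rw [Function.iterate_succ_apply']
      show (((qTheta (q:ℂ))^[k] _ ((q:ℂ)⁻¹ * x) y) - ((qTheta (q:ℂ))^[k] _ x ((q:ℂ) * y))) / ((q:ℂ)⁻¹ * x - y) = _
      rw [ih hk' _ _ hs1, ih hk' _ _ hs2]
      obtain ⟨m, hm⟩ : ∃ m, n - k = m + 1 := ⟨n - (k+1), by omega⟩
      have hm' : n - (k + 1) = m := by omega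
      have hpoch : qPoch (q:ℂ) (q:ℂ) (m+1) = qPoch (q:ℂ) (q:ℂ) m * (1 - q * q ^ m) := by
        unfold qPoch; rw [Finset.prod_range_succ]
      have h1 : qPoch (q:ℂ) (q:ℂ) m ≠ 0 := poch_ne_s14 q hq0 hq1 m
      have h2 : (1 : ℂ) - q * q ^ m ≠ 0 := by
        have := poch_ne_s14 q hq0 hq1 (m+1)
        rw [hpoch] at this
        exact fun h => this (by rw [h, mul_zero])
      rw [hm, hm', cauchyA (q:ℂ) hq0' x y (m+1), cauchyB (q:ℂ) hq0' x y m,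
        div_eq_iff hden, hpoch]
      field_simp
      ring
end

section
/- Let θ_{xy} f(x,y) := (f(q^{-1}x, y) − f(x, qy))/(q^{-1}x − y). Then θ_{xy}^k{(xt;q)_∞/(yt;q)_∞} = (−t)^k (xt;q)_∞/(yt;q)_∞ for all k ≥ 0, where the function is regarded as a function of (x,y) with |yt| < 1. -/
open Finset

lemma summable_log_aux (q : ℝ) (hq0 : 0 < q) (hq1 : q < 1) (a : ℂ) :
    Summable fun j : ℕ => Complex.log (1 - a * (q : ℂ) ^ j) := by
  have hg : Summable fun j : ℕ => 3 / 2 * ‖a‖ * q ^ j :=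
    (summable_geometric_of_lt_one hq0.le hq1).mul_left _
  refine hg.of_norm_bounded_eventually_nat ?_
  have ht : Filter.Tendsto (fun j : ℕ => ‖a‖ * q ^ j) Filter.atTop (nhds 0) := by
    simpa using (tendsto_pow_atTop_nhds_zero_of_lt_one hq0.le hq1).const_mul ‖a‖
  filter_upwards [ht.eventually_lt_const (by norm_num : (0 : ℝ) < 1 / 2)] with j hj
  have hnorm : ‖-(a * (q : ℂ) ^ j)‖ = ‖a‖ * q ^ j := by
    simp [norm_mul, norm_pow, Complex.norm_real, Real.norm_eq_abs, abs_of_pos hq0]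
  have hb : ‖-(a * (q : ℂ) ^ j)‖ ≤ 1 / 2 := by rw [hnorm]; linarith
  calc ‖Complex.log (1 - a * (q : ℂ) ^ j)‖
      = ‖Complex.log (1 + -(a * (q : ℂ) ^ j))‖ := by rw [sub_eq_add_neg]
    _ ≤ 3 / 2 * ‖-(a * (q : ℂ) ^ j)‖ := Complex.norm_log_one_add_half_le_self hb
    _ = 3 / 2 * ‖a‖ * q ^ j := by rw [hnorm]; ring

lemma multipliable_aux (q : ℝ) (hq0 : 0 < q) (hq1 : q < 1) (a : ℂ) :
    Multipliable fun j : ℕ => (1 : ℂ) - a * (q : ℂ) ^ j := by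
  by_cases h : ∀ j : ℕ, (1 : ℂ) - a * (q : ℂ) ^ j ≠ 0
  · refine ⟨Complex.exp (∑' j, Complex.log (1 - a * (q : ℂ) ^ j)), ?_⟩
    exact ((summable_log_aux q hq0 hq1 a).hasSum.cexp).congr_fun
      fun j => (Complex.exp_log (h j)).symm
  · push_neg at h
    obtain ⟨j0, hj0⟩ := h
    refine ⟨0, ?_⟩
    have hev : ∀ᶠ s : Finset ℕ in Filter.atTop,
        ∏ i ∈ s, ((1 : ℂ) - a * (q : ℂ) ^ i) = 0 := by
      filter_upwards [Filter.eventually_ge_atTop ({j0} : Finset ℕ)] with s hs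
      exact Finset.prod_eq_zero (hs (Finset.mem_singleton_self j0)) hj0
    refine Filter.Tendsto.congr' ?_ tendsto_const_nhds
    filter_upwards [hev] with s hs
    exact hs.symm

set_option maxHeartbeats 1000000 in
lemma shift_aux (q : ℝ) (hq0 : 0 < q) (hq1 : q < 1) (a : ℂ) :
    qPochInf (q : ℂ) a = (1 - a) * qPochInf (q : ℂ) ((q : ℂ) * a) := by
  unfold qPochInf
  have hfe : (fun n : ℕ => (1 : ℂ) - a * (q : ℂ) ^ (n + 1))
      = fun n : ℕ => (1 : ℂ) - ((q : ℂ) * a) * (q : ℂ) ^ n := by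
    funext n
    rw [pow_succ']
    ring
  have hm : Multipliable (fun n : ℕ => (1 : ℂ) - a * (q : ℂ) ^ (n + 1)) := by
    rw [hfe]
    exact multipliable_aux q hq0 hq1 ((q : ℂ) * a)
  rw [tprod_eq_zero_mul' hm, hfe]
  simp only [pow_zero, mul_one]

lemma poch_ne_aux (q : ℝ) (hq0 : 0 < q) (hq1 : q < 1) (a : ℂ)
    (ha : ‖a‖ < 1) : qPochInf (q : ℂ) a ≠ 0 := by
  have hne : ∀ j : ℕ, (1 : ℂ) - a * (q : ℂ) ^ j ≠ 0 := by
    intro j h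
    have habs : ‖a * (q : ℂ) ^ j‖ < 1 := by
      rw [norm_mul, norm_pow, Complex.norm_real, Real.norm_eq_abs, abs_of_pos hq0]
      have h1 : q ^ j ≤ 1 := pow_le_one₀ hq0.le hq1.le
      have h2 : (0:ℝ) ≤ ‖a‖ := norm_nonneg a
      nlinarith
    rw [← sub_eq_zero.mp h] at habs
    simp at habs
  have hp : HasProd (fun j : ℕ => (1 : ℂ) - a * (q : ℂ) ^ j)
      (Complex.exp (∑' j, Complex.log (1 - a * (q : ℂ) ^ j))) :=
    ((summable_log_aux q hq0 hq1 a).hasSum.cexp).congr_fun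
      fun j => (Complex.exp_log (hne j)).symm
  rw [qPochInf, hp.tprod_eq]
  exact Complex.exp_ne_zero _

lemma step_aux (q : ℝ) (hq0 : 0 < q) (hq1 : q < 1) (t x y : ℂ)
    (hyt : ‖y * t‖ < 1) (hD : (q : ℂ)⁻¹ * x - y ≠ 0) :
    (qPochInf (q : ℂ) (((q : ℂ)⁻¹ * x) * t) / qPochInf (q : ℂ) (y * t) -
        qPochInf (q : ℂ) (x * t) / qPochInf (q : ℂ) (((q : ℂ) * y) * t)) /
      ((q : ℂ)⁻¹ * x - y) = -t * (qPochInf (q : ℂ) (x * t) / qPochInf (q : ℂ) (y * t)) := by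
  have hq : (q : ℂ) ≠ 0 := by exact_mod_cast hq0.ne'
  have h1 : qPochInf (q : ℂ) (((q : ℂ)⁻¹ * x) * t)
      = (1 - (q : ℂ)⁻¹ * x * t) * qPochInf (q : ℂ) (x * t) := by
    have h := shift_aux q hq0 hq1 (((q : ℂ)⁻¹ * x) * t)
    rw [show (q : ℂ) * (((q : ℂ)⁻¹ * x) * t) = x * t by field_simp] at h
    exact h
  have h2 : qPochInf (q : ℂ) (y * t) = (1 - y * t) * qPochInf (q : ℂ) (((q : ℂ) * y) * t) := by
    have h := shift_aux q hq0 hq1 (y * t)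
    rw [show (q : ℂ) * (y * t) = ((q : ℂ) * y) * t by ring] at h
    exact h
  have hB : qPochInf (q : ℂ) (((q : ℂ) * y) * t) ≠ 0 := by
    refine poch_ne_aux q hq0 hq1 _ ?_
    rw [show ((q : ℂ) * y) * t = (q : ℂ) * (y * t) by ring, norm_mul, Complex.norm_real, Real.norm_eq_abs,
      abs_of_pos hq0]
    have h2 : (0:ℝ) ≤ ‖y * t‖ := norm_nonneg _
    nlinarith
  have h1yt : (1 : ℂ) - y * t ≠ 0 := by
    intro h
    rw [← sub_eq_zero.mp h] at hyt
    simp at hyt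
  rw [h1, h2]
  generalize (q : ℂ)⁻¹ * x = u at hD ⊢
  generalize qPochInf (q : ℂ) (x * t) = P
  generalize qPochInf (q : ℂ) (((q : ℂ) * y) * t) = B at hB ⊢
  rw [div_eq_iff hD, div_sub_div _ _ (mul_ne_zero h1yt hB) hB, div_eq_iff (mul_ne_zero (mul_ne_zero h1yt hB) hB)]
  rw [show -t * (P / ((1 - y * t) * B)) * (u - y) * ((1 - y * t) * B * B) = -t * P * (u - y) * B * (((1 - y * t) * B) / ((1 - y * t) * B)) by ring, div_self (mul_ne_zero h1yt hB)]
  ring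


theorem stmt15 (q : ℝ) (hq0 : 0 < q) (hq1 : q < 1) (t : ℂ) (k : ℕ) (x y : ℂ)
    (hyt : ‖y * t‖ < 1) (hxy : ∀ m : ℤ, x ≠ (q : ℂ) ^ m * y) :
    (qTheta (q : ℂ))^[k]
        (fun u v => qPochInf (q : ℂ) (u * t) / qPochInf (q : ℂ) (v * t)) x y =
      (-t) ^ k * qPochInf (q : ℂ) (x * t) / qPochInf (q : ℂ) (y * t) := by
  have hq : (q : ℂ) ≠ 0 := by
    exact_mod_cast hq0.ne'
  induction k generalizing x y with
  | zero => simp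
  | succ n ih =>
    have hD : (q : ℂ)⁻¹ * x - y ≠ 0 := by
      intro h
      apply hxy 1
      have hx : (q : ℂ)⁻¹ * x = y := sub_eq_zero.mp h
      have : x = (q : ℂ) * ((q : ℂ)⁻¹ * x) := by field_simp
      rw [this, hx, zpow_one]
    have hyt2 : ‖((q : ℂ) * y) * t‖ < 1 := by
      rw [show ((q : ℂ) * y) * t = (q : ℂ) * (y * t) by ring, norm_mul, Complex.norm_real, Real.norm_eq_abs,
        abs_of_pos hq0]
      have h2 : (0 : ℝ) ≤ ‖y * t‖ := norm_nonneg _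
      nlinarith
    have hxy1 : ∀ m : ℤ, (q : ℂ)⁻¹ * x ≠ (q : ℂ) ^ m * y := by
      intro m h
      apply hxy (m + 1)
      have hx : x = (q : ℂ) * ((q : ℂ)⁻¹ * x) := by field_simp
      rw [hx, h, zpow_add_one₀ hq]
      ring
    have hxy2 : ∀ m : ℤ, x ≠ (q : ℂ) ^ m * ((q : ℂ) * y) := by
      intro m h
      apply hxy (m + 1)
      rw [h, zpow_add_one₀ hq]
      ring
    have e1 := ih ((q : ℂ)⁻¹ * x) y hyt hxy1
    have e2 := ih x ((q : ℂ) * y) hyt2 hxy2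
    rw [Function.iterate_succ_apply']
    show ((qTheta (q : ℂ))^[n] _ ((q : ℂ)⁻¹ * x) y -
        (qTheta (q : ℂ))^[n] _ x ((q : ℂ) * y)) / ((q : ℂ)⁻¹ * x - y) = _
    rw [e1, e2]
    have hstep := step_aux q hq0 hq1 t x y hyt hD
    calc ((-t) ^ n * qPochInf (q : ℂ) (((q : ℂ)⁻¹ * x) * t) / qPochInf (q : ℂ) (y * t) -
            (-t) ^ n * qPochInf (q : ℂ) (x * t) / qPochInf (q : ℂ) (((q : ℂ) * y) * t)) /
          ((q : ℂ)⁻¹ * x - y)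
        = (-t) ^ n * ((qPochInf (q : ℂ) (((q : ℂ)⁻¹ * x) * t) / qPochInf (q : ℂ) (y * t) -
            qPochInf (q : ℂ) (x * t) / qPochInf (q : ℂ) (((q : ℂ) * y) * t)) /
          ((q : ℂ)⁻¹ * x - y)) := by ring
      _ = (-t) ^ n * (-t * (qPochInf (q : ℂ) (x * t) / qPochInf (q : ℂ) (y * t))) := by
          rw [hstep]
      _ = (-t) ^ (n + 1) * qPochInf (q : ℂ) (x * t) / qPochInf (q : ℂ) (y * t) := by
          rw [pow_succ]
          ring
end
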